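/- arXiv:1606.02750 — 2 statements merged into one kernel-verified Lean document; each statement's English description precedes it below -/
import Mathlib

section
/- For every z in the open unit disc 𝕌 = {z ∈ ℂ : |z| < 1}, the function sin(2√z) − 2√z·cos(2√z) has the property that 2z√z/(sin(2√z) − 2√z·cos(2√z)) has real part at least 1/2, where √z denotes the principal branch of the square root; equivalently, Re(z/𝒲_{1,5/2}(z)) ≥ 1/2 on 𝕌, where the ratio is extended analytically to z = 0 with value 1. -/
open Complex Nat

/-- Factorial comparison used for the geometric majorant. -/
lemma aux_key : ∀ n : ℕ,
    (2 * ((n : ℝ) + 2)) * 4 ^ (n + 1) * (15 * 7 ^ n) ≤ 2 * ((2 * (n + 2) + 1)! : ℝ) := by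
  intro n
  induction n with
  | zero => norm_num [Nat.factorial]
  | succ n ih =>
      have h1 : (2 * (n + 1 + 2) + 1)! =
          (2 * (n + 2) + 3) * ((2 * (n + 2) + 2) * (2 * (n + 2) + 1)!) := by
        have : 2 * (n + 1 + 2) + 1 = (2 * (n + 2) + 1) + 1 + 1 := by ring
        rw [this, Nat.factorial_succ, Nat.factorial_succ]
      rw [h1]
      push_cast
      have hn : (0 : ℝ) ≤ (n : ℝ) := Nat.cast_nonneg n
      have hF : (0 : ℝ) < ((2 * (n + 2) + 1)! : ℝ) := by positivity
      have h4 : (0 : ℝ) < (4 : ℝ) ^ n := by positivity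
      have h7 : (0 : ℝ) < (7 : ℝ) ^ n := by positivity
      have hmul := mul_le_mul_of_nonneg_left ih
        (show (0 : ℝ) ≤ (2 * (n : ℝ) + 6) * (2 * (n : ℝ) + 7) by positivity)
      push_cast at ih hmul
      ring_nf at ih hmul ⊢
      nlinarith [mul_pos h4 h7, mul_nonneg (mul_nonneg hn h4.le) h7.le,
        mul_nonneg (mul_nonneg (mul_nonneg hn hn) h4.le) h7.le, hF, hn]

lemma aux_fact_bound (n : ℕ) :
    (2 * ((n : ℝ) + 2)) * 4 ^ (n + 1) / ((2 * (n + 2) + 1)! : ℝ) ≤ (2 / 15) * (1 / 7) ^ n := by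
  have hF : (0 : ℝ) < ((2 * (n + 2) + 1)! : ℝ) := by positivity
  have h7 : (0 : ℝ) < (15 : ℝ) * 7 ^ n := by positivity
  have hr : (2 / 15 : ℝ) * (1 / 7) ^ n = 2 / (15 * 7 ^ n) := by
    rw [div_pow, one_pow]
    field_simp
  rw [hr, div_le_div_iff₀ hF h7]
  have := aux_key n
  nlinarith [this]

/-- Series remainder bound: for `‖t‖ ≤ 2`,
`‖sin t − t cos t − t³/3‖ ≤ (7/45)‖t‖³`. -/
lemma aux_remainder (t : ℂ) (ht : ‖t‖ ≤ 2) :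
    ‖Complex.sin t - t * Complex.cos t - t ^ 3 / 3‖ ≤ 7 / 45 * ‖t‖ ^ 3 := by
  set f : ℕ → ℂ := fun n => (-1) ^ (n + 1) * (2 * n) * t ^ (2 * n + 1) / (2 * n + 1)! with hf
  have hsum : HasSum f (Complex.sin t - t * Complex.cos t) := by
    have h1 := Complex.hasSum_sin t
    have h2 := (Complex.hasSum_cos t).mul_left t
    have h3 := h1.sub h2
    refine h3.congr_fun fun n => ?_
    have hfac : ((2 * n + 1)! : ℂ) = ((2 * n + 1 : ℕ) : ℂ) * ((2 * n)! : ℂ) := by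
      rw [Nat.factorial_succ]; push_cast; ring
    have hne1 : ((2 * n)! : ℂ) ≠ 0 := Nat.cast_ne_zero.mpr (Nat.factorial_ne_zero _)
    have hne2 : ((2 * n + 1 : ℕ) : ℂ) ≠ 0 := Nat.cast_ne_zero.mpr (by omega)
    have hneF : ((2 * n + 1)! : ℂ) ≠ 0 := Nat.cast_ne_zero.mpr (Nat.factorial_ne_zero _)
    have e2 : t * ((-1 : ℂ) ^ n * t ^ (2 * n) / ((2 * n)! : ℂ)) =
        (-1) ^ n * ((2 * n + 1 : ℕ) : ℂ) * t ^ (2 * n + 1) / ((2 * n + 1)! : ℂ) := by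
      rw [hfac, pow_succ, ← mul_div_assoc,
        div_eq_div_iff hne1 (mul_ne_zero hne2 hne1)]
      ring
    simp only [hf]
    rw [e2, div_sub_div_same]
    congr 1
    push_cast
    ring
  have hsum2 : HasSum (fun n => f (n + 2))
      (Complex.sin t - t * Complex.cos t - (f 0 + f 1)) := by
    have := (hasSum_nat_add_iff' (f := f) 2).mpr hsum
    simpa [Finset.sum_range_succ] using this
  have hf01 : f 0 + f 1 = t ^ 3 / 3 := by
    simp only [hf]
    norm_num [Nat.factorial]
    ring
  rw [hf01] at hsum2
  -- geometric majorant
  have hgeom : HasSum (fun n : ℕ => ‖t‖ ^ 3 * ((2 / 15) * (1 / 7) ^ n))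
      (7 / 45 * ‖t‖ ^ 3) := by
    have h := (hasSum_geometric_of_lt_one (by norm_num : (0:ℝ) ≤ 1/7)
      (by norm_num)).mul_left (‖t‖ ^ 3 * (2 / 15))
    have e : ‖t‖ ^ 3 * (2 / 15) * (1 - 1 / 7 : ℝ)⁻¹ = 7 / 45 * ‖t‖ ^ 3 := by
      rw [show ((1 : ℝ) - 1 / 7)⁻¹ = 7 / 6 by norm_num]; ring
    rw [e] at h
    refine h.congr_fun fun n => ?_
    ring
  have hbound : ∀ n : ℕ, ‖f (n + 2)‖ ≤ ‖t‖ ^ 3 * ((2 / 15) * (1 / 7) ^ n) := by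
    intro n
    have hnorm : ‖f (n + 2)‖ = 2 * ((n : ℝ) + 2) * ‖t‖ ^ (2 * (n + 2) + 1)
        / ((2 * (n + 2) + 1)! : ℝ) := by
      simp only [hf]
      simp only [norm_div, norm_mul, norm_pow, norm_neg, norm_one, one_pow, one_mul,
        Complex.norm_natCast, Complex.norm_ofNat]
      push_cast
      ring
    rw [hnorm]
    have hsplit : ‖t‖ ^ (2 * (n + 2) + 1) = ‖t‖ ^ 3 * (‖t‖ ^ 2) ^ (n + 1) := by
      rw [← pow_mul, ← pow_add]
      congr 1
      omega
    have ht2 : ‖t‖ ^ 2 ≤ 4 := by nlinarith [norm_nonneg t]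
    have hpow : (‖t‖ ^ 2) ^ (n + 1) ≤ 4 ^ (n + 1) :=
      pow_le_pow_left₀ (by positivity) ht2 _
    have hF : (0 : ℝ) < ((2 * (n + 2) + 1)! : ℝ) := by positivity
    have h1 : 2 * ((n : ℝ) + 2) * ‖t‖ ^ (2 * (n + 2) + 1) / ((2 * (n + 2) + 1)! : ℝ)
        ≤ ‖t‖ ^ 3 * ((2 * ((n : ℝ) + 2)) * 4 ^ (n + 1) / ((2 * (n + 2) + 1)! : ℝ)) := by
      rw [hsplit, div_le_iff₀ hF]
      have hc : (0 : ℝ) ≤ 2 * ((n : ℝ) + 2) * ‖t‖ ^ 3 := by positivity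
      calc 2 * ((n : ℝ) + 2) * (‖t‖ ^ 3 * (‖t‖ ^ 2) ^ (n + 1))
          ≤ 2 * ((n : ℝ) + 2) * ‖t‖ ^ 3 * 4 ^ (n + 1) := by nlinarith
        _ = ‖t‖ ^ 3 * ((2 * ((n : ℝ) + 2)) * 4 ^ (n + 1) / ((2 * (n + 2) + 1)! : ℝ))
            * ((2 * (n + 2) + 1)! : ℝ) := by field_simp
    refine h1.trans ?_
    exact mul_le_mul_of_nonneg_left (aux_fact_bound n) (by positivity)
  have hle := tsum_of_norm_bounded hgeom hbound
  rw [hsum2.tsum_eq] at hle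
  exact hle

/-- If `‖u - 1‖ ≤ 1` and `u ≠ 0` then `Re (u⁻¹) ≥ 1/2`. -/
lemma aux_inv_re (u : ℂ) (hu : u ≠ 0) (h : ‖u - 1‖ ≤ 1) : (1 : ℝ) / 2 ≤ u⁻¹.re := by
  have hsq : Complex.normSq (u - 1) ≤ 1 := by
    have h1 := Complex.sq_norm (u - 1)
    have h2 : ‖u - 1‖ ≤ 1 := h
    nlinarith [Complex.normSq_nonneg (u - 1), norm_nonneg (u - 1)]
  have hre : Complex.normSq u ≤ 2 * u.re := by
    simp only [Complex.normSq_apply, Complex.sub_re, Complex.sub_im, Complex.one_re,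
      Complex.one_im] at hsq ⊢
    nlinarith
  have hpos : 0 < Complex.normSq u := Complex.normSq_pos.mpr hu
  rw [Complex.inv_re, le_div_iff₀ hpos]
  linarith

/-- For every `z` in the open unit disc,
`Re(2z√z/(sin(2√z) − 2√z·cos(2√z))) ≥ 1/2`, where `√z` is the principal branch of the
square root and the expression is understood, at `z = 0`, as its analytic extension with
value `1`. -/
theorem re_div_sin_sub_cos_ge (z : ℂ) (hz : ‖z‖ < 1) :
    (1 : ℝ) / 2 ≤
      (if z = 0 then (1 : ℂ)
        else (2 * z * z ^ (1 / 2 : ℂ)) /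
          (Complex.sin (2 * z ^ (1 / 2 : ℂ)) -
            2 * z ^ (1 / 2 : ℂ) * Complex.cos (2 * z ^ (1 / 2 : ℂ)))).re := by
  by_cases h0 : z = 0
  · simp [h0]; norm_num
  · rw [if_neg h0]
    set w : ℂ := z ^ (1 / 2 : ℂ) with hw
    have hw2 : w ^ 2 = z := by
      rw [hw, show (1 / 2 : ℂ) = ((2 : ℕ) : ℂ)⁻¹ by norm_num]
      exact Complex.cpow_nat_inv_pow z two_ne_zero
    have hwne : w ≠ 0 := by
      intro h; apply h0; rw [← hw2, h]; ring
    set t : ℂ := 2 * w with htdef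
    have htne : t ≠ 0 := by simp [htdef, hwne]
    have hwnorm : ‖w‖ < 1 := by
      by_contra hc
      push_neg at hc
      have h1 : (1 : ℝ) ≤ ‖w‖ ^ 2 := by nlinarith
      rw [← norm_pow, hw2] at h1
      linarith
    have htnorm : ‖t‖ ≤ 2 := by
      rw [htdef, norm_mul]
      simp only [Complex.norm_ofNat]
      linarith
    have hnum : 2 * z * w = t ^ 3 / 4 := by
      rw [← hw2, htdef]; ring
    have hrem := aux_remainder t htnorm
    set D : ℂ := Complex.sin t - t * Complex.cos t with hD
    set u : ℂ := 4 * D / t ^ 3 with hu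
    have ht3 : t ^ 3 ≠ 0 := pow_ne_zero _ htne
    have ht3norm : (0 : ℝ) < ‖t‖ ^ 3 := pow_pos (norm_pos_iff.mpr htne) 3
    have hu1 : ‖u - 1‖ ≤ 43 / 45 := by
      have h43 : ‖u - 4 / 3‖ ≤ 28 / 45 := by
        have e : u - 4 / 3 = 4 * (D - t ^ 3 / 3) / t ^ 3 := by
          rw [hu]
          field_simp
        rw [e, norm_div, norm_mul, norm_pow]
        rw [div_le_iff₀ ht3norm]
        simp only [Complex.norm_ofNat]
        nlinarith
      calc ‖u - 1‖ = ‖(u - 4 / 3) + (1 / 3 : ℂ)‖ := by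
            rw [show u - 1 = (u - 4 / 3) + (1 / 3 : ℂ) by ring]
        _ ≤ ‖u - 4 / 3‖ + ‖(1 / 3 : ℂ)‖ := norm_add_le _ _
        _ ≤ 43 / 45 := by
            have e1 : ‖(1 / 3 : ℂ)‖ = 1 / 3 := by norm_num
            rw [e1]; linarith
    have hune : u ≠ 0 := by
      intro h
      rw [h] at hu1
      simp only [zero_sub, norm_neg, norm_one] at hu1
      norm_num at hu1
    have hDne : D ≠ 0 := by
      intro h
      apply hune
      rw [hu, h]
      simp
    have hfinal : (2 * z * w) / D = u⁻¹ := by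
      rw [hnum, hu]
      field_simp
    have heq : (2 * z * w) / (Complex.sin (2 * w) - 2 * w * Complex.cos (2 * w)) = u⁻¹ := by
      rw [← hfinal, hD, htdef]
    rw [heq]
    exact aux_inv_re u hune (hu1.trans (by norm_num))
end

section
/- Let λ, μ be real numbers with λ ≥ 1 and μ > 3. Then the normalized Wright function 𝒲_{λ,μ} satisfies Re(𝒲'_{λ,μ}(z)) ≥ (μ−3)/(μ−1) > 0 for all z in the open unit disc 𝕌, and consequently 𝒲_{λ,μ} is univalent (injective) on 𝕌. -/
/-- The normalized Wright function
`𝒲_{λ,μ}(z) = z + ∑_{m=1}^∞ (Γ(μ)/(m! Γ(λm+μ))) z^{m+1}`. -/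
noncomputable def normWright (lam mu : ℝ) (z : ℂ) : ℂ :=
  ∑' m : ℕ, ((Real.Gamma mu / (Nat.factorial m * Real.Gamma (lam * m + mu)) : ℝ) : ℂ) * z ^ (m + 1)

/-- The derivative of the normalized Wright function:
`𝒲'_{λ,μ}(z) = 1 + ∑_{m=1}^∞ (Γ(μ)(m+1)/(m! Γ(λm+μ))) z^m`. -/
noncomputable def normWrightDeriv (lam mu : ℝ) (z : ℂ) : ℂ :=
  ∑' m : ℕ,
    ((Real.Gamma mu * (m + 1) / (Nat.factorial m * Real.Gamma (lam * m + mu)) : ℝ) : ℂ) * z ^ m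

lemma wr_fact_bound (m : ℕ) : (m : ℝ) + 1 ≤ 2 * m.factorial := by
  induction m with
  | zero => norm_num
  | succ n ih =>
    have h1 : (1 : ℝ) ≤ n.factorial := by exact_mod_cast Nat.one_le_iff_ne_zero.mpr n.factorial_ne_zero
    have : ((n+1).factorial : ℝ) = (n+1) * n.factorial := by exact_mod_cast Nat.factorial_succ n
    rw [this]
    push_cast
    nlinarith [Nat.cast_nonneg (α := ℝ) n]

lemma wr_gamma_lb {mu : ℝ} (hmu : 3 < mu) (m : ℕ) :
    Real.Gamma mu * mu ^ m ≤ Real.Gamma (mu + m) := by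
  induction m with
  | zero => simp
  | succ n ih =>
    have hpos : (0 : ℝ) < mu + n := by positivity
    have h1 : Real.Gamma (mu + (n+1)) = (mu + n) * Real.Gamma (mu + n) := by
      have := Real.Gamma_add_one hpos.ne'
      rw [show mu + ((n:ℝ) + 1) = mu + (n:ℝ) + 1 by ring, this]
    push_cast
    rw [h1, pow_succ]
    have hg : 0 ≤ Real.Gamma mu * mu ^ n := by
      have := Real.Gamma_pos_of_pos (by linarith : (0:ℝ) < mu)
      positivity
    calc Real.Gamma mu * (mu ^ n * mu) = (Real.Gamma mu * mu ^ n) * mu := by ring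
    _ ≤ Real.Gamma (mu + n) * mu := by
        apply mul_le_mul_of_nonneg_right ih (by linarith)
    _ ≤ (mu + n) * Real.Gamma (mu + n) := by
        have := (Real.Gamma_pos_of_pos hpos).le
        nlinarith [Nat.cast_nonneg (α := ℝ) n]

lemma wr_gamma_mono {lam mu : ℝ} (hlam : 1 ≤ lam) (hmu : 3 < mu) (m : ℕ) :
    Real.Gamma (mu + m) ≤ Real.Gamma (lam * m + mu) := by
  have h1 : (2 : ℝ) ≤ mu + m := by
    have := Nat.cast_nonneg (α := ℝ) m; linarith
  have h2 : mu + m ≤ lam * m + mu := by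
    have := Nat.cast_nonneg (α := ℝ) m
    nlinarith
  exact Real.Gamma_strictMonoOn_Ici.monotoneOn (Set.mem_Ici.mpr h1)
    (Set.mem_Ici.mpr (h1.trans h2)) h2

/-- coefficient of `z^m` in the derivative series -/
noncomputable def wcoef (lam mu : ℝ) (m : ℕ) : ℝ :=
  Real.Gamma mu * (m + 1) / (Nat.factorial m * Real.Gamma (lam * m + mu))

lemma wcoef_nonneg {lam mu : ℝ} (hlam : 1 ≤ lam) (hmu : 3 < mu) (m : ℕ) :
    0 ≤ wcoef lam mu m := by
  have h1 : (0:ℝ) < Real.Gamma mu := Real.Gamma_pos_of_pos (by linarith)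
  have h2 : (0:ℝ) < Real.Gamma (lam * m + mu) := by
    apply Real.Gamma_pos_of_pos
    have := Nat.cast_nonneg (α := ℝ) m
    nlinarith
  have h3 : (0:ℝ) < Nat.factorial m := by exact_mod_cast Nat.factorial_pos m
  unfold wcoef
  positivity

lemma wcoef_zero {lam mu : ℝ} (hmu : 3 < mu) : wcoef lam mu 0 = 1 := by
  have h1 : (0:ℝ) < Real.Gamma mu := Real.Gamma_pos_of_pos (by linarith)
  simp [wcoef, h1.ne']

lemma wcoef_le {lam mu : ℝ} (hlam : 1 ≤ lam) (hmu : 3 < mu) (m : ℕ) :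
    wcoef lam mu m ≤ 2 * (1 / mu) ^ m := by
  have hmu0 : (0:ℝ) < mu := by linarith
  have h1 : (0:ℝ) < Real.Gamma mu := Real.Gamma_pos_of_pos hmu0
  have h2 : (0:ℝ) < Real.Gamma (lam * m + mu) := by
    apply Real.Gamma_pos_of_pos
    have := Nat.cast_nonneg (α := ℝ) m
    nlinarith
  have h3 : (0:ℝ) < Nat.factorial m := by exact_mod_cast Nat.factorial_pos m
  have hG : Real.Gamma mu * mu ^ m ≤ Real.Gamma (lam * m + mu) :=
    (wr_gamma_lb hmu m).trans (wr_gamma_mono hlam hmu m)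
  have hf := wr_fact_bound m
  have hpow : (0:ℝ) < mu ^ m := by positivity
  have key : Real.Gamma mu * (m + 1) * mu ^ m ≤ 2 * (m.factorial * Real.Gamma (lam * m + mu)) := by
    nlinarith [mul_le_mul hf hG (by positivity : (0:ℝ) ≤ Real.Gamma mu * mu ^ m)
      (by positivity : (0:ℝ) ≤ 2 * m.factorial)]
  have h2m : (0:ℝ) < 2 * (1/mu)^m := by positivity
  rw [wcoef, div_le_iff₀ (by positivity)]
  calc Real.Gamma mu * (↑m + 1) = (Real.Gamma mu * (↑m + 1) * mu ^ m) * (mu^m)⁻¹ := by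
        field_simp
  _ ≤ (2 * (m.factorial * Real.Gamma (lam * m + mu))) * (mu^m)⁻¹ := by
        apply mul_le_mul_of_nonneg_right key (by positivity)
  _ = 2 * (1/mu)^m * (↑m.factorial * Real.Gamma (lam * ↑m + mu)) := by
        rw [one_div, inv_pow]; ring

lemma wr_summable_u {mu : ℝ} (hmu : 3 < mu) :
    Summable (fun m : ℕ => 2 * (1 / mu) ^ m) := by
  apply Summable.mul_left
  apply summable_geometric_of_lt_one (by positivity)
  rw [div_lt_one (by linarith)]; linarith

lemma wr_summable_term {lam mu : ℝ} (hlam : 1 ≤ lam) (hmu : 3 < mu) {z : ℂ}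
    (hz : ‖z‖ ≤ 1) :
    Summable (fun m : ℕ => ((wcoef lam mu m : ℝ) : ℂ) * z ^ m) := by
  apply Summable.of_norm_bounded (wr_summable_u hmu)
  intro m
  rw [norm_mul, norm_pow, Complex.norm_real, Real.norm_eq_abs,
    abs_of_nonneg (wcoef_nonneg hlam hmu m)]
  calc wcoef lam mu m * ‖z‖ ^ m ≤ wcoef lam mu m * 1 := by
        apply mul_le_mul_of_nonneg_left _ (wcoef_nonneg hlam hmu m)
        exact pow_le_one₀ (norm_nonneg z) hz
  _ ≤ 2 * (1/mu) ^ m := by rw [mul_one]; exact wcoef_le hlam hmu m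

lemma wr_deriv_eq (lam mu : ℝ) (z : ℂ) :
    normWrightDeriv lam mu z = ∑' m : ℕ, ((wcoef lam mu m : ℝ) : ℂ) * z ^ m := by
  rfl

lemma wr_tsum_tail {mu : ℝ} (hmu : 3 < mu) :
    ∑' m : ℕ, 2 * (1 / mu) ^ (m + 1) = 2 / (mu - 1) := by
  have h1 : (1:ℝ)/mu < 1 := by rw [div_lt_one (by linarith)]; linarith
  have h0 : (0:ℝ) ≤ 1/mu := by positivity
  have : ∀ m : ℕ, 2 * (1/mu) ^ (m+1) = (2 * (1/mu)) * (1/mu)^m := fun m => by ring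
  rw [tsum_congr this, tsum_mul_left, tsum_geometric_of_lt_one h0 h1]
  field_simp

lemma wr_re_bound {lam mu : ℝ} (hlam : 1 ≤ lam) (hmu : 3 < mu) {z : ℂ}
    (hz : ‖z‖ < 1) : (mu - 3) / (mu - 1) ≤ (normWrightDeriv lam mu z).re := by
  have hsum := wr_summable_term hlam hmu hz.le
  rw [wr_deriv_eq, Complex.re_tsum hsum]
  have hsre : Summable (fun m : ℕ => (((wcoef lam mu m : ℝ) : ℂ) * z ^ m).re) :=
    hsum.map Complex.reCLM Complex.continuous_re
  rw [Summable.tsum_eq_zero_add hsre]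
  have h0 : (((wcoef lam mu 0 : ℝ) : ℂ) * z ^ 0).re = 1 := by
    simp [wcoef_zero (lam := lam) hmu]
  rw [h0]
  have hb : ∀ m : ℕ, -(2 * (1/mu) ^ (m+1)) ≤ (((wcoef lam mu (m+1) : ℝ) : ℂ) * z ^ (m+1)).re := by
    intro m
    have h1 : |(((wcoef lam mu (m+1) : ℝ) : ℂ) * z ^ (m+1)).re| ≤ ‖((wcoef lam mu (m+1) : ℝ) : ℂ) * z ^ (m+1)‖ :=
      Complex.abs_re_le_norm _
    have h2 : ‖((wcoef lam mu (m+1) : ℝ) : ℂ) * z ^ (m+1)‖ ≤ 2 * (1/mu)^(m+1) := by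
      rw [norm_mul, norm_pow, Complex.norm_real, Real.norm_eq_abs,
        abs_of_nonneg (wcoef_nonneg hlam hmu (m+1))]
      calc wcoef lam mu (m+1) * ‖z‖ ^ (m+1) ≤ wcoef lam mu (m+1) * 1 := by
            apply mul_le_mul_of_nonneg_left _ (wcoef_nonneg hlam hmu (m+1))
            exact pow_le_one₀ (norm_nonneg z) hz.le
      _ ≤ 2 * (1/mu) ^ (m+1) := by rw [mul_one]; exact wcoef_le hlam hmu (m+1)
    have := neg_abs_le ((((wcoef lam mu (m+1) : ℝ) : ℂ) * z ^ (m+1)).re)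
    linarith
  have hs1 : Summable (fun m : ℕ => (((wcoef lam mu (m+1) : ℝ) : ℂ) * z ^ (m+1)).re) :=
    (summable_nat_add_iff 1).mpr hsre
  have hs2 : Summable (fun m : ℕ => -(2 * (1/mu) ^ (m+1))) :=
    (((summable_nat_add_iff 1).mpr (wr_summable_u hmu))).neg
  have hts : ∑' m : ℕ, -(2 * (1/mu)^(m+1)) ≤ ∑' m : ℕ, (((wcoef lam mu (m+1) : ℝ) : ℂ) * z ^ (m+1)).re :=
    Summable.tsum_le_tsum hb hs2 hs1
  rw [tsum_neg, wr_tsum_tail hmu] at hts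
  have hne : mu - 1 ≠ 0 := sub_ne_zero.mpr (by linarith)
  have : (mu - 3) / (mu - 1) = 1 + -(2 / (mu - 1)) := by
    field_simp
    ring
  linarith

lemma wr_hasDerivAt {lam mu : ℝ} (hlam : 1 ≤ lam) (hmu : 3 < mu) {z : ℂ}
    (hz : ‖z‖ < 1) :
    HasDerivAt (normWright lam mu) (normWrightDeriv lam mu z) z := by
  have hz' : z ∈ Metric.ball (0 : ℂ) 1 := by simpa [Metric.mem_ball, dist_eq_norm] using hz
  rw [wr_deriv_eq]
  exact hasDerivAt_tsum_of_isPreconnected (wr_summable_u hmu) Metric.isOpen_ball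
    ((convex_ball (0:ℂ) 1).isPreconnected)
    (g := fun m w => ((Real.Gamma mu / (Nat.factorial m * Real.Gamma (lam * m + mu)) : ℝ) : ℂ) * w ^ (m + 1))
    (g' := fun m w => ((wcoef lam mu m : ℝ) : ℂ) * w ^ m)
    (fun m w _ => by
      have h := (hasDerivAt_pow (m + 1) w).const_mul
        (((Real.Gamma mu / (Nat.factorial m * Real.Gamma (lam * m + mu)) : ℝ) : ℂ))
      refine h.congr_deriv ?_
      simp only [wcoef]
      push_cast
      ring)
    (fun m w hw => by
      have hw1 : ‖w‖ ≤ 1 := by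
        have : dist w 0 < 1 := Metric.mem_ball.mp hw
        rw [dist_eq_norm, sub_zero] at this
        exact this.le
      rw [norm_mul, norm_pow, Complex.norm_real, Real.norm_eq_abs,
        abs_of_nonneg (wcoef_nonneg hlam hmu m)]
      calc wcoef lam mu m * ‖w‖ ^ m ≤ wcoef lam mu m * 1 := by
            apply mul_le_mul_of_nonneg_left _ (wcoef_nonneg hlam hmu m)
            exact pow_le_one₀ (norm_nonneg w) hw1
      _ ≤ 2 * (1/mu) ^ m := by rw [mul_one]; exact wcoef_le hlam hmu m)
    (Metric.mem_ball_self one_pos)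
    (by
      apply summable_of_ne_finset_zero (s := ∅)
      intro m _
      simp)
    hz'

/-- If `λ ≥ 1` and `μ > 3`, then `Re 𝒲'_{λ,μ}(z) ≥ (μ−3)/(μ−1) > 0` on the open unit
disc, and consequently `𝒲_{λ,μ}` is univalent (injective) on the open unit disc. -/
theorem normWright_injOn (lam mu : ℝ) (hlam : 1 ≤ lam) (hmu : 3 < mu) :
    (∀ z : ℂ, ‖z‖ < 1 → (mu - 3) / (mu - 1) ≤ (normWrightDeriv lam mu z).re) ∧
    (0 : ℝ) < (mu - 3) / (mu - 1) ∧
    Set.InjOn (normWright lam mu) {z : ℂ | ‖z‖ < 1} := by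
  have hpos : (0:ℝ) < (mu - 3) / (mu - 1) := div_pos (by linarith) (by linarith)
  refine ⟨fun z hz => wr_re_bound hlam hmu hz, hpos, ?_⟩
  intro z₁ h₁ z₂ h₂ hfeq
  simp only [Set.mem_setOf_eq] at h₁ h₂
  by_contra hne
  set w : ℂ := z₂ - z₁ with hwdef
  have hw0 : w ≠ 0 := sub_ne_zero.mpr (Ne.symm hne)
  set γ : ℝ → ℂ := fun t => z₁ + (t:ℂ) * w with hγdef
  have hmem : ∀ t ∈ Set.Icc (0:ℝ) 1, ‖γ t‖ < 1 := by
    intro t ht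
    obtain ⟨ht0, ht1⟩ := ht
    have hre : γ t = ((1 - t : ℝ) : ℂ) * z₁ + ((t : ℝ) : ℂ) * z₂ := by
      simp only [hγdef, hwdef]
      push_cast
      ring
    rw [hre]
    calc ‖((1 - t : ℝ) : ℂ) * z₁ + ((t : ℝ) : ℂ) * z₂‖
        ≤ ‖((1 - t : ℝ) : ℂ) * z₁‖ + ‖((t : ℝ) : ℂ) * z₂‖ := norm_add_le _ _
    _ = (1 - t) * ‖z₁‖ + t * ‖z₂‖ := by
        rw [norm_mul, norm_mul, Complex.norm_real, Complex.norm_real,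
          Real.norm_eq_abs, Real.norm_eq_abs, abs_of_nonneg (by linarith),
          abs_of_nonneg ht0]
    _ < 1 := by
        rcases lt_or_eq_of_le ht1 with h | h
        · have a1 : (1 - t) * ‖z₁‖ < (1 - t) * 1 := by
            apply mul_lt_mul_of_pos_left h₁ (by linarith)
          have a2 : t * ‖z₂‖ ≤ t * 1 := mul_le_mul_of_nonneg_left h₂.le ht0
          linarith
        · subst h; simpa using h₂
  have hγ : ∀ t : ℝ, HasDerivAt γ w t := by
    intro t
    simpa [hγdef] using ((hasDerivAt_id t).ofReal_comp.mul_const w).const_add z₁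
  set g : ℝ → ℝ := fun t => (normWright lam mu (γ t) * (starRingEnd ℂ) w).re with hgdef
  have hg : ∀ t ∈ Set.Icc (0:ℝ) 1,
      HasDerivAt g (Complex.normSq w * (normWrightDeriv lam mu (γ t)).re) t := by
    intro t ht
    have hf := wr_hasDerivAt hlam hmu (hmem t ht)
    have h1 : HasDerivAt (fun s : ℝ => normWright lam mu (γ s))
        (w * normWrightDeriv lam mu (γ t)) t := by
      have := (hf.hasFDerivAt.restrictScalars ℝ).comp_hasDerivAt t (hγ t)
      exact this
    have h2 := h1.mul_const ((starRingEnd ℂ) w)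
    have h3 := Complex.reCLM.hasFDerivAt.comp_hasDerivAt t h2
    have h4 : (w * normWrightDeriv lam mu (γ t) * (starRingEnd ℂ) w)
        = ((Complex.normSq w : ℝ) : ℂ) * normWrightDeriv lam mu (γ t) := by
      rw [mul_comm w, mul_assoc, Complex.mul_conj, mul_comm]
    refine h3.congr_deriv ?_
    rw [h4]
    simp [Complex.re_ofReal_mul]
  have hmono : StrictMonoOn g (Set.Icc (0:ℝ) 1) :=
    strictMonoOn_of_deriv_pos (convex_Icc 0 1)
      (fun t ht => (hg t ht).continuousAt.continuousWithinAt)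
      (fun t ht => by
        rw [interior_Icc] at ht
        rw [(hg t (Set.mem_Icc_of_Ioo ht)).deriv]
        exact mul_pos (Complex.normSq_pos.mpr hw0)
          (hpos.trans_le (wr_re_bound hlam hmu (hmem t (Set.mem_Icc_of_Ioo ht)))))
  have e0 : γ 0 = z₁ := by simp [hγdef]
  have e1 : γ 1 = z₂ := by simp [hγdef, hwdef]
  have hlt : g 0 < g 1 :=
    hmono (Set.mem_Icc.mpr ⟨le_refl 0, zero_le_one⟩)
      (Set.mem_Icc.mpr ⟨zero_le_one, le_refl 1⟩) zero_lt_one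
  have heq : g 0 = g 1 := by
    simp only [hgdef, e0, e1, hfeq]
  linarith
end
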